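/- Let F ∈ ℂ[x,y] be a nonconstant polynomial that is quasi-homogeneous of some degree d with respect to positive integer weights (w₁, w₂), and write F = x^A · y^B · S where A, B are the maximal exponents with x^A y^B ∣ F (so x ∤ S and y ∤ S). If the saturation S is squarefree, then every irreducible polynomial that divides both ∂F/∂x and ∂F/∂y is associated to x or to y; equivalently, the greatest common divisor of ∂F/∂x and ∂F/∂y is, up to a unit, a monomial x^α y^β. -/

import Mathlib

open MvPolynomial

lemma coeff_pderiv' (i : Fin 2) (f : MvPolynomial (Fin 2) ℂ) (m : Fin 2 →₀ ℕ) :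
    coeff m (pderiv i f) = ((m i : ℂ) + 1) * coeff (m + Finsupp.single i 1) f := by
  induction f using MvPolynomial.induction_on' with
  | monomial s a =>
    rw [pderiv_monomial, coeff_monomial, coeff_monomial]
    by_cases h : s = m + Finsupp.single i 1
    · subst h
      have h1 : (m + Finsupp.single i 1) - Finsupp.single i 1 = m := by simp
      rw [h1, if_pos rfl, Finsupp.add_apply, Finsupp.single_eq_same]
      simp only [if_true]
      push_cast
      ring
    · rw [if_neg h]
      by_cases hs : s i = 0
      · by_cases h2 : s - Finsupp.single i 1 = m
        · rw [if_pos h2]; simp [hs]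
        · rw [if_neg h2]; ring
      · have hne : s - Finsupp.single i 1 ≠ m := by
          intro hm
          apply h
          rw [← hm, tsub_add_cancel_of_le]
          exact Finsupp.single_le_iff.mpr (Nat.one_le_iff_ne_zero.mpr hs)
        rw [if_neg hne]; ring
  | add p q hp hq => simp only [map_add, coeff_add, hp, hq]; ring

lemma pderiv0_eq_zero_of_self_dvd (q : MvPolynomial (Fin 2) ℂ) (h : q ∣ pderiv 0 q) :
    pderiv 0 q = 0 := by
  by_contra hne
  have hbound : ∀ m ∈ (pderiv 0 q).support, m 0 < degreeOf 0 q := by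
    intro m hm
    have hc : coeff m (pderiv 0 q) ≠ 0 := mem_support_iff.mp hm
    rw [coeff_pderiv'] at hc
    have hc2 : coeff (m + Finsupp.single 0 1) q ≠ 0 := by
      intro h0; rw [h0, mul_zero] at hc; exact hc rfl
    have hmem : m + Finsupp.single 0 1 ∈ q.support := mem_support_iff.mpr hc2
    have hs := Finset.le_sup (f := fun m : Fin 2 →₀ ℕ => m 0) hmem
    rw [← degreeOf_eq_sup] at hs
    simp only [Finsupp.add_apply, Finsupp.single_eq_same] at hs
    omega
  have hsupp : (pderiv 0 q).support.Nonempty :=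
    Finset.nonempty_iff_ne_empty.mpr (fun he => hne (support_eq_empty.mp he))
  obtain ⟨m₀, hm₀⟩ := hsupp
  have hpos : 0 < degreeOf 0 q := lt_of_le_of_lt (Nat.zero_le _) (hbound m₀ hm₀)
  have hlt : degreeOf 0 (pderiv 0 q) < degreeOf 0 q := by
    rw [degreeOf_eq_sup]
    exact Finset.sup_lt_iff hpos |>.mpr hbound
  have hd : (finSuccEquiv ℂ 1) q ∣ (finSuccEquiv ℂ 1) (pderiv 0 q) := map_dvd _ h
  have hne' : (finSuccEquiv ℂ 1) (pderiv 0 q) ≠ 0 :=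
    (map_ne_zero_iff _ (AlgEquiv.injective _)).mpr hne
  have hle := Polynomial.natDegree_le_of_dvd hd hne'
  rw [natDegree_finSuccEquiv, natDegree_finSuccEquiv] at hle
  omega

lemma pderiv_eq_zero_of_self_dvd (q : MvPolynomial (Fin 2) ℂ) (i : Fin 2)
    (h : q ∣ pderiv i q) : pderiv i q = 0 := by
  set e := Equiv.swap i (0 : Fin 2) with he
  have hinj : Function.Injective (e : Fin 2 → Fin 2) := e.injective
  have hren : rename (e : Fin 2 → Fin 2) (pderiv i q) = pderiv 0 (rename e q) := by
    rw [← pderiv_rename hinj i q, Equiv.swap_apply_left]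
  have hd : rename (e : Fin 2 → Fin 2) q ∣ pderiv 0 (rename e q) := by
    rw [← hren]; exact map_dvd _ h
  have h0 := pderiv0_eq_zero_of_self_dvd _ hd
  rw [← hren] at h0
  exact (MvPolynomial.rename_injective _ hinj) (by simpa using h0)

lemma prime_X_fin2 (i : Fin 2) : Prime (X i : MvPolynomial (Fin 2) ℂ) := by
  have h0 : Prime (X 0 : MvPolynomial (Fin 2) ℂ) := by
    rw [← MulEquiv.prime_iff (finSuccEquiv ℂ 1).toRingEquiv.toMulEquiv]
    simpa [finSuccEquiv_X_zero] using Polynomial.prime_X (R := MvPolynomial (Fin 1) ℂ)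
  rw [← MulEquiv.prime_iff (renameEquiv ℂ (Equiv.swap i (0 : Fin 2))).toRingEquiv.toMulEquiv]
  have : (renameEquiv ℂ (Equiv.swap i (0 : Fin 2))).toRingEquiv.toMulEquiv
      (X i : MvPolynomial (Fin 2) ℂ) = X 0 := by
    simp [renameEquiv_apply, rename_X]
  rw [this]
  exact h0

lemma X_mul_pderiv_monomial (i : Fin 2) (m : Fin 2 →₀ ℕ) (c : ℂ) :
    X i * pderiv i (monomial m c) = monomial m (c * m i) := by
  rw [pderiv_monomial]
  by_cases h : m i = 0
  · simp [h]
  · rw [X, monomial_mul, one_mul, add_tsub_cancel_of_le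
      (Finsupp.single_le_iff.mpr (Nat.one_le_iff_ne_zero.mpr h))]

lemma euler_identity (w₁ w₂ d : ℕ) (F : MvPolynomial (Fin 2) ℂ)
    (hqh : ∀ m ∈ F.support, w₁ * m 0 + w₂ * m 1 = d) :
    C (w₁ : ℂ) * (X 0 * pderiv 0 F) + C (w₂ : ℂ) * (X 1 * pderiv 1 F) = C (d : ℂ) * F := by
  conv_lhs => rw [F.as_sum]
  conv_rhs => rw [F.as_sum]
  have e0 : pderiv (0 : Fin 2) (∑ m ∈ F.support, monomial m (coeff m F)) =
      ∑ m ∈ F.support, pderiv (0 : Fin 2) (monomial m (coeff m F)) :=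
    by simpa using map_sum ((pderiv (0 : Fin 2)).toLinearMap) (fun m => monomial m (coeff m F)) F.support
  have e1 : pderiv (1 : Fin 2) (∑ m ∈ F.support, monomial m (coeff m F)) =
      ∑ m ∈ F.support, pderiv (1 : Fin 2) (monomial m (coeff m F)) :=
    by simpa using map_sum ((pderiv (1 : Fin 2)).toLinearMap) (fun m => monomial m (coeff m F)) F.support
  rw [e0, e1]
  simp only [Finset.mul_sum]
  rw [← Finset.sum_add_distrib]
  refine Finset.sum_congr rfl fun m hm => ?_
  rw [X_mul_pderiv_monomial, X_mul_pderiv_monomial, C_mul_monomial, C_mul_monomial,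
    C_mul_monomial, ← map_add]
  congr 1
  have h := hqh m hm
  have h2 : ((w₁ * m 0 + w₂ * m 1 : ℕ) : ℂ) = (d : ℂ) := by exact_mod_cast congrArg (Nat.cast : ℕ → ℂ) h
  push_cast at h2
  linear_combination (coeff m F) * h2

/-- Single-facet case of Lemma 4.1 (zeroSum): if `F ∈ ℂ[x,y]` is a nonconstant
quasi-homogeneous polynomial with squarefree saturation `S`, then every irreducible
common divisor of the two partial derivatives is associated to `x` or to `y`. -/
theorem common_irreducible_divisor_of_partials_is_variable
    (w₁ w₂ d : ℕ) (hw₁ : 0 < w₁) (hw₂ : 0 < w₂)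
    (F S : MvPolynomial (Fin 2) ℂ) (A B : ℕ)
    (hF_nonconst : F.totalDegree ≠ 0)
    (hqh : ∀ m ∈ F.support, w₁ * m 0 + w₂ * m 1 = d)
    (hfac : F = X 0 ^ A * X 1 ^ B * S)
    (hxS : ¬ X 0 ∣ S) (hyS : ¬ X 1 ∣ S)
    (hsqf : Squarefree S) :
    ∀ q : MvPolynomial (Fin 2) ℂ, Irreducible q →
      q ∣ pderiv 0 F → q ∣ pderiv 1 F →
      Associated q (X 0) ∨ Associated q (X 1) := by
  intro q hq hq0 hq1
  have hqp : Prime q := UniqueFactorizationMonoid.irreducible_iff_prime.mp hq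
  -- d ≠ 0
  have hd0 : d ≠ 0 := by
    intro hd
    apply hF_nonconst
    rw [totalDegree_eq_zero_iff]
    intro m hm x
    have h := hqh m hm
    rw [hd] at h
    have h1 : w₁ * m 0 = 0 := Nat.eq_zero_of_add_eq_zero_right h
    have h2 : w₂ * m 1 = 0 := Nat.eq_zero_of_add_eq_zero_left h
    have hm0 : m 0 = 0 := (Nat.mul_eq_zero.mp h1).resolve_left hw₁.ne'
    have hm1 : m 1 = 0 := (Nat.mul_eq_zero.mp h2).resolve_left hw₂.ne'
    fin_cases x <;> assumption
  -- Euler identity gives q ∣ F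
  have heuler := euler_identity w₁ w₂ d F hqh
  have hqF : q ∣ F := by
    have h1 : q ∣ C (d : ℂ) * F := by
      rw [← heuler]
      exact dvd_add ((hq0.mul_left _).mul_left _) ((hq1.mul_left _).mul_left _)
    have h2 : F = C ((d : ℂ)⁻¹) * (C (d : ℂ) * F) := by
      rw [← mul_assoc, ← C_mul, inv_mul_cancel₀ (Nat.cast_ne_zero.mpr hd0), C_1, one_mul]
    rw [h2]
    exact h1.mul_left _
  rw [hfac] at hqF
  rcases hqp.2.2 _ _ hqF with hM | hS
  · rcases hqp.2.2 _ _ hM with h0 | h1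
    · exact Or.inl (hq.associated_of_dvd (prime_X_fin2 0).irreducible (hqp.dvd_of_dvd_pow h0))
    · exact Or.inr (hq.associated_of_dvd (prime_X_fin2 1).irreducible (hqp.dvd_of_dvd_pow h1))
  · -- q divides the saturation S : contradiction
    exfalso
    have hqX0 : ¬ q ∣ X 0 := fun hdvd =>
      hxS (dvd_trans (hq.associated_of_dvd (prime_X_fin2 0).irreducible hdvd).symm.dvd hS)
    have hqX1 : ¬ q ∣ X 1 := fun hdvd =>
      hyS (dvd_trans (hq.associated_of_dvd (prime_X_fin2 1).irreducible hdvd).symm.dvd hS)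
    have hqM : ¬ q ∣ X 0 ^ A * X 1 ^ B := by
      intro h
      rcases hqp.2.2 _ _ h with h | h
      exacts [hqX0 (hqp.dvd_of_dvd_pow h), hqX1 (hqp.dvd_of_dvd_pow h)]
    have hSd : ∀ i : Fin 2, q ∣ pderiv i F → q ∣ pderiv i S := by
      intro i hqi
      have hp : pderiv i F =
          pderiv i (X 0 ^ A * X 1 ^ B) * S + (X 0 ^ A * X 1 ^ B) * pderiv i S := by
        rw [hfac, pderiv_mul]
      have hdm : q ∣ (X 0 ^ A * X 1 ^ B) * pderiv i S := by
        have he : (X 0 ^ A * X 1 ^ B) * pderiv i S =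
            pderiv i F - pderiv i (X 0 ^ A * X 1 ^ B) * S := by rw [hp]; ring
        rw [he]
        exact dvd_sub hqi (hS.mul_left _)
      exact (hqp.2.2 _ _ hdm).resolve_left hqM
    have hS0 := hSd 0 hq0
    have hS1 := hSd 1 hq1
    obtain ⟨T, hT⟩ := hS
    have hqT : ¬ q ∣ T := by
      rintro ⟨U, hU⟩
      exact hq.not_isUnit (hsqf q ⟨U, by rw [hT, hU]; ring⟩)
    have hqd : ∀ i : Fin 2, q ∣ pderiv i S → q ∣ pderiv i q := by
      intro i hi
      have hp : pderiv i S = pderiv i q * T + q * pderiv i T := by rw [hT, pderiv_mul]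
      have hdm : q ∣ pderiv i q * T := by
        have he : pderiv i q * T = pderiv i S - q * pderiv i T := by rw [hp]; ring
        rw [he]
        exact dvd_sub hi (dvd_mul_right q _)
      exact (hqp.2.2 _ _ hdm).resolve_right hqT
    have hz0 := pderiv_eq_zero_of_self_dvd q 0 (hqd 0 hS0)
    have hz1 := pderiv_eq_zero_of_self_dvd q 1 (hqd 1 hS1)
    -- q is constant
    have hqc : q = C (coeff 0 q) := by
      ext m
      rw [coeff_C]
      by_cases hm : m = 0
      · rw [hm]; simp
      · have hex : ∃ i : Fin 2, m i ≠ 0 := by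
          by_contra hno
          push_neg at hno
          exact hm (Finsupp.ext fun i => hno i)
        obtain ⟨i, hi⟩ := hex
        have key := coeff_pderiv' i q (m - Finsupp.single i 1)
        have hmm : (m - Finsupp.single i 1) + Finsupp.single i 1 = m :=
          tsub_add_cancel_of_le (Finsupp.single_le_iff.mpr (Nat.one_le_iff_ne_zero.mpr hi))
        rw [hmm] at key
        have hz : pderiv i q = 0 := by fin_cases i <;> assumption
        rw [hz, coeff_zero] at key
        have hcoeff : coeff m q = 0 := by
          rcases mul_eq_zero.mp key.symm with h | h
          · exact absurd h (Nat.cast_add_one_ne_zero _)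
          · exact h
        rw [hcoeff, if_neg (fun h => hm h.symm)]
    by_cases hc : coeff 0 q = 0
    · rw [hc, map_zero] at hqc
      rw [hqc] at hq
      exact not_irreducible_zero hq
    · exact hq.not_isUnit (hqc ▸ (isUnit_iff_ne_zero.mpr hc).map (C : ℂ →+* MvPolynomial (Fin 2) ℂ))
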